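/- Let L₁, L₂, L₁′, L₂′ ⊂ V = 𝔽₂^{2n} be Lagrangian subspaces with dim(L₁ ∩ L₂) = dim(L₁′ ∩ L₂′), and let 0 ≤ m ≤ n. Then Σ_{S ∈ I_m(V)} |S ∩ L₁|² |S ∩ L₂|² = Σ_{S ∈ I_m(V)} |S ∩ L₁′|² |S ∩ L₂′|². -/

import Mathlib

/-- The field with two elements. -/
abbrev F2 := ZMod 2

/-- The phase space `V = 𝔽₂ⁿ × 𝔽₂ⁿ`. -/
abbrev V (n : ℕ) : Type := (Fin n → F2) × (Fin n → F2)

/-- The symplectic form `[a,b] = aₓ·b_z + a_z·bₓ` on `V n`. -/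
def symp {n : ℕ} (a b : V n) : F2 :=
  (∑ i, a.1 i * b.2 i) + (∑ i, a.2 i * b.1 i)

/-- A subspace is isotropic if the symplectic form vanishes on it. -/
def IsIsotropic {n : ℕ} (S : Submodule F2 (V n)) : Prop :=
  ∀ x ∈ S, ∀ y ∈ S, symp x y = 0

/-- A Lagrangian subspace is an isotropic subspace of dimension `n`. -/
def IsLagrangian {n : ℕ} (S : Submodule F2 (V n)) : Prop :=
  IsIsotropic S ∧ Module.finrank F2 S = n

set_option synthInstance.maxHeartbeats 1000000
set_option maxHeartbeats 1000000

open Module LinearMap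

/-- symp as a bilinear form -/
def Bf (n : ℕ) : LinearMap.BilinForm F2 (V n) :=
  LinearMap.mk₂ F2 symp
    (by intro a a' b; simp [symp, add_mul, Finset.sum_add_distrib]; ring)
    (by intro c a b; simp [symp, Finset.mul_sum, smul_eq_mul, mul_add, mul_assoc])
    (by intro a b b'; simp [symp, mul_add, Finset.sum_add_distrib]; ring)
    (by intro c a b; simp [symp, Finset.mul_sum, smul_eq_mul, mul_add, mul_left_comm])

@[simp] lemma Bf_apply {n : ℕ} (a b : V n) : Bf n a b = symp a b := rfl

lemma symp_comm {n : ℕ} (a b : V n) : symp a b = symp b a := by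
  simp [symp, mul_comm]; ring

lemma symp_self {n : ℕ} (a : V n) : symp a a = 0 := by
  have : (∑ i, a.1 i * a.2 i) + (∑ i, a.2 i * a.1 i)
      = (∑ i, a.1 i * a.2 i) + (∑ i, a.1 i * a.2 i) := by
    congr 1; exact Finset.sum_congr rfl fun i _ => mul_comm _ _
  rw [symp, this, ← two_mul]
  have h2 : (2 : F2) = 0 := by decide
  rw [h2, zero_mul]

lemma Bf_refl {n : ℕ} : (Bf n).IsRefl := fun a b h => by
  simpa [symp_comm a b] using h

lemma Bf_nondeg {n : ℕ} : (Bf n).Nondegenerate := by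
  refine (LinearMap.IsRefl.nondegenerate_iff_separatingLeft (B := Bf n) Bf_refl).mpr ?_
  intro a ha
  have h1 : ∀ i, a.2 i = 0 := fun i => by simpa [symp, Pi.single_apply, Finset.sum_ite_eq] using ha (Pi.single i 1, 0)
  have h2 : ∀ i, a.1 i = 0 := fun i => by simpa [symp, Pi.single_apply, Finset.sum_ite_eq] using ha (0, Pi.single i 1)
  ext i <;> simp [h1, h2]

lemma finrank_V (n : ℕ) : Module.finrank F2 (V n) = n + n := by
  simp [V, Module.finrank_prod]


lemma orth_lagrangian {n : ℕ} {L : Submodule F2 (V n)} (hL : IsLagrangian L) :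
    (Bf n).orthogonal L = L := by
  have hle : L ≤ (Bf n).orthogonal L := fun x hx =>
    LinearMap.BilinForm.mem_orthogonal_iff.2 fun y hy => hL.1 y hy x hx
  have hfr : Module.finrank F2 ((Bf n).orthogonal L) = Module.finrank F2 L := by
    rw [LinearMap.BilinForm.finrank_orthogonal Bf_nondeg, finrank_V, hL.2]
    omega
  exact (Submodule.eq_of_le_of_finrank_eq hle hfr.symm).symm

/-- the "pairing with family u" linear map -/
def pair {n : ℕ} {ι : Type} [Fintype ι] (u : ι → V n) : V n →ₗ[F2] (ι → F2) :=
  LinearMap.pi (fun i => Bf n (u i))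

@[simp] lemma pair_apply {n : ℕ} {ι : Type} [Fintype ι] (u : ι → V n) (x : V n) (i : ι) :
    pair u x i = symp (u i) x := rfl

lemma ker_pair {n : ℕ} {ι : Type} [Fintype ι] (u : ι → V n) :
    LinearMap.ker (pair u) = (Bf n).orthogonal (Submodule.span F2 (Set.range u)) := by
  ext x
  simp only [LinearMap.mem_ker, LinearMap.BilinForm.mem_orthogonal_iff]
  constructor
  · intro h y hy
    induction hy using Submodule.span_induction with
    | mem y hy => obtain ⟨i, rfl⟩ := hy; exact congrFun h i
    | zero => simp [LinearMap.BilinForm.IsOrtho]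
    | add a b _ _ ha hb => simp only [LinearMap.BilinForm.IsOrtho, map_add,
        LinearMap.add_apply] at *; rw [ha, hb, add_zero]
    | smul c a _ ha => simp only [LinearMap.BilinForm.IsOrtho, map_smul,
        LinearMap.smul_apply] at *; rw [ha, smul_zero]
  · intro h
    funext i
    exact h (u i) (Submodule.subset_span ⟨i, rfl⟩)

lemma pair_surjective {n : ℕ} {ι : Type} [Fintype ι] {u : ι → V n}
    (hu : LinearIndependent F2 u) : Function.Surjective (pair u) := by
  have hker : Module.finrank F2 (LinearMap.ker (pair u))
      = (n + n) - Fintype.card ι := by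
    rw [ker_pair, LinearMap.BilinForm.finrank_orthogonal Bf_nondeg, finrank_V,
      finrank_span_eq_card hu]
  have hcard : Fintype.card ι ≤ n + n := by
    have := hu.fintype_card_le_finrank
    rwa [finrank_V] at this
  have hrank : Module.finrank F2 (LinearMap.range (pair u)) = Fintype.card ι := by
    have h := LinearMap.finrank_range_add_finrank_ker (pair u)
    rw [hker, finrank_V] at h
    omega
  have : LinearMap.range (pair u) = ⊤ := by
    apply Submodule.eq_top_of_finrank_eq
    rw [hrank, Module.finrank_fintype_fun_eq_card]
  rw [← LinearMap.range_eq_top]; exact this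

lemma char2 (x : F2) : x + x = 0 := by fin_cases x <;> decide

lemma symp_add_left {n : ℕ} (a b c : V n) : symp (a + b) c = symp a c + symp b c := by
  simp [symp, add_mul, Finset.sum_add_distrib]; ring

lemma symp_add_right {n : ℕ} (a b c : V n) : symp a (b + c) = symp a b + symp a c :=
  map_add (Bf n a) b c

lemma symp_smul_left {n : ℕ} (t : F2) (a b : V n) : symp (t • a) b = t * symp a b := by
  simp [symp, Finset.mul_sum, smul_eq_mul, mul_add, mul_assoc]

lemma symp_smul_right {n : ℕ} (t : F2) (a b : V n) : symp a (t • b) = t * symp a b :=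
  map_smul (Bf n a) t b

lemma symp_sum_right {n : ℕ} {α : Type*} (c : V n) (s : Finset α) (f : α → V n) :
    symp c (∑ l ∈ s, f l) = ∑ l ∈ s, symp c (f l) :=
  map_sum (Bf n c) f s

lemma symp_sum_left {n : ℕ} {α : Type*} (c : V n) (s : Finset α) (f : α → V n) :
    symp (∑ l ∈ s, f l) c = ∑ l ∈ s, symp (f l) c := by
  rw [symp_comm, symp_sum_right]
  exact Finset.sum_congr rfl fun l _ => symp_comm _ _

lemma linIndep_of_dual {n : ℕ} {ι : Type} [Fintype ι] [DecidableEq ι] (z z' : ι → V n)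
    (h : ∀ i j, symp (z' i) (z j) = if i = j then 1 else 0) : LinearIndependent F2 z := by
  rw [Fintype.linearIndependent_iff]
  intro g hg i
  have := congrArg (fun x => symp (z' i) x) hg
  simp only [symp_sum_right, symp_smul_right, h] at this
  rw [show symp (z' i) 0 = 0 from map_zero (Bf n (z' i))] at this
  simpa [mul_ite, mul_one, mul_zero, Finset.sum_ite_eq] using this

lemma exists_adapted {n k : ℕ} (L₁ L₂ : Submodule F2 (V n))
    (h₁ : IsLagrangian L₁) (h₂ : IsLagrangian L₂)
    (hk : Module.finrank F2 ↥(L₁ ⊓ L₂) = k) :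
    ∃ u v : (Fin k ⊕ Fin (n - k)) → V n,
      (∀ i j, symp (u i) (u j) = 0) ∧
      (∀ i j, symp (v i) (v j) = 0) ∧
      (∀ i j, symp (u i) (v j) = if i = j then 1 else 0) ∧
      Submodule.span F2 (Set.range u) = L₁ ∧
      Submodule.span F2
        (Set.range (Sum.elim (fun i => u (Sum.inl i)) (fun j => v (Sum.inr j)))) = L₂ := by
  classical
  set I := L₁ ⊓ L₂ with hI
  have hIL₁ : I ≤ L₁ := inf_le_left
  have hIL₂ : I ≤ L₂ := inf_le_right
  have hkn : k ≤ n := by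
    have h' : Module.finrank F2 ↥I ≤ Module.finrank F2 ↥L₁ := Submodule.finrank_mono hIL₁
    have e := h₁.2
    omega
  obtain ⟨C', hC'⟩ := Submodule.exists_isCompl (I.comap L₁.subtype)
  set C : Submodule F2 (V n) := C'.map L₁.subtype with hC
  have hCL₁ : C ≤ L₁ := Submodule.map_subtype_le _ _
  have hmapI : (I.comap L₁.subtype).map L₁.subtype = I := by
    rw [Submodule.map_comap_subtype]; exact inf_eq_right.mpr hIL₁
  have hinf : I ⊓ C = ⊥ := by
    rw [← hmapI, hC, ← Submodule.map_inf _ (Submodule.injective_subtype L₁),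
      hC'.inf_eq_bot, Submodule.map_bot]
  have hsup : I ⊔ C = L₁ := by
    rw [← hmapI, hC, ← Submodule.map_sup, hC'.sup_eq_top, Submodule.map_subtype_top]
  have hfrC : Module.finrank F2 C = n - k := by
    have h := Submodule.finrank_sup_add_finrank_inf_eq I C
    rw [hsup, hinf, finrank_bot, hk, h₁.2] at h
    omega
  let a : Basis (Fin k) F2 ↥I := Module.finBasisOfFinrankEq F2 ↥I hk
  let c : Basis (Fin (n - k)) F2 ↥C := Module.finBasisOfFinrankEq F2 ↥C hfrC
  set u : (Fin k ⊕ Fin (n - k)) → V n :=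
    Sum.elim (fun i => (a i : V n)) (fun j => (c j : V n)) with hu
  have huI : ∀ i, u (Sum.inl i) ∈ I := fun i => (a i).2
  have huC : ∀ j, u (Sum.inr j) ∈ C := fun j => (c j).2
  have huL₁ : ∀ i, u i ∈ L₁ := by rintro (i | j); exacts [hIL₁ (huI i), hCL₁ (huC j)]
  have hspanI : Submodule.span F2 (Set.range fun i => (a i : V n)) = I := by
    have : (fun i => (a i : V n)) = I.subtype ∘ a := rfl
    rw [this, Set.range_comp, Submodule.span_image, Basis.span_eq, Submodule.map_subtype_top]
  have hspanC : Submodule.span F2 (Set.range fun j => (c j : V n)) = C := by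
    have : (fun j => (c j : V n)) = C.subtype ∘ c := rfl
    rw [this, Set.range_comp, Submodule.span_image, Basis.span_eq, Submodule.map_subtype_top]
  have hspanu : Submodule.span F2 (Set.range u) = L₁ := by
    rw [hu, Set.Sum.elim_range, Submodule.span_union, hspanI, hspanC, hsup]
  have hindepu : LinearIndependent F2 u := by
    apply LinearIndependent.sum_type
    · exact (a.linearIndependent.map' I.subtype (Submodule.ker_subtype I))
    · exact (c.linearIndependent.map' C.subtype (Submodule.ker_subtype C))
    · rw [hspanI, hspanC]; exact disjoint_iff.mpr hinf
  have hGuu : ∀ i j, symp (u i) (u j) = 0 := fun i j => h₁.1 _ (huL₁ i) _ (huL₁ j)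
  have hsurj := pair_surjective hindepu
  -- dual family inside L₂ for the inr part
  let ψ : ↥L₂ →ₗ[F2] (Fin (n - k) → F2) := (pair fun j => u (Sum.inr j)).comp L₂.subtype
  have hψ : ∀ (x : ↥L₂) (j), ψ x j = symp (u (Sum.inr j)) (x : V n) := fun x j => rfl
  have hkerψ : LinearMap.ker ψ = I.comap L₂.subtype := by
    ext x
    simp only [LinearMap.mem_ker, Submodule.mem_comap]
    constructor
    · intro hx
      have hx1 : (x : V n) ∈ LinearMap.ker (pair u) := by
        rw [LinearMap.mem_ker]; funext i
        cases i with
        | inl i => exact h₂.1 _ (hIL₂ (huI i)) _ x.2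
        | inr j => exact congrFun hx j
      rw [ker_pair, hspanu, orth_lagrangian h₁] at hx1
      exact ⟨hx1, x.2⟩
    · intro hx
      funext j
      exact h₁.1 _ (huL₁ (Sum.inr j)) _ hx.1
  have hψsurj : Function.Surjective ψ := by
    have hfk : Module.finrank F2 (LinearMap.ker ψ) = k := by
      rw [hkerψ, LinearEquiv.finrank_eq (Submodule.comapSubtypeEquivOfLe hIL₂), hk]
    have h := LinearMap.finrank_range_add_finrank_ker ψ
    rw [hfk, h₂.2] at h
    have hfr : Module.finrank F2 (LinearMap.range ψ) = n - k := by omega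
    have hr : LinearMap.range ψ = ⊤ :=
      Submodule.eq_top_of_finrank_eq
        (by rw [hfr, Module.finrank_fintype_fun_eq_card, Fintype.card_fin])
    rw [← LinearMap.range_eq_top]; exact hr
  let w : (Fin k ⊕ Fin (n - k)) → V n :=
    Sum.elim (fun i => Classical.choose (hsurj (Pi.single (Sum.inl i) 1)))
      (fun j => (Classical.choose (hψsurj (Pi.single j 1))).1)
  have hwL₂ : ∀ j, w (Sum.inr j) ∈ L₂ := fun j => (Classical.choose (hψsurj (Pi.single j 1))).2
  have hGuw : ∀ i j, symp (u i) (w j) = if i = j then 1 else 0 := by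
    rintro i (j | j)
    · have hspec := Classical.choose_spec (hsurj (Pi.single (Sum.inl j) 1))
      have h2 := congrFun hspec i
      simp only [pair_apply] at h2
      rw [show w (Sum.inl j) = Classical.choose (hsurj (Pi.single (Sum.inl j) 1)) from rfl, h2,
        Pi.single_apply]
    · cases i with
      | inl i =>
        have : symp (u (Sum.inl i)) (w (Sum.inr j)) = 0 :=
          h₂.1 _ (hIL₂ (huI i)) _ (hwL₂ j)
        rw [this]; simp
      | inr i =>
        have hspec := Classical.choose_spec (hψsurj (Pi.single j 1))
        have h2 := congrFun hspec i
        rw [hψ] at h2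
        rw [show w (Sum.inr j) = (Classical.choose (hψsurj (Pi.single j 1))).1 from rfl, h2,
          Pi.single_apply]
        simp
  have hGwu : ∀ i l, symp (w i) (u l) = if l = i then 1 else 0 := fun i l => by
    rw [symp_comm, hGuw]
  -- the Gram-Schmidt style correction
  let wt : (Fin k ⊕ Fin (n - k)) → ℕ := Sum.elim (fun i => (i : ℕ)) (fun j => k + (j : ℕ))
  have hwtinj : ∀ i j, wt i = wt j → i = j := by
    rintro (i | i) (j | j) h <;> simp only [wt, Sum.elim_inl, Sum.elim_inr] at h
    · exact congrArg Sum.inl (Fin.ext h)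
    · exact absurd h (by have := i.2; omega)
    · exact absurd h (by have := j.2; omega)
    · exact congrArg Sum.inr (Fin.ext (by omega))
  let v : (Fin k ⊕ Fin (n - k)) → V n := fun j =>
    w j + ∑ l ∈ Finset.univ.filter (fun l => wt l < wt j), symp (w l) (w j) • u l
  have hvdef : ∀ j, v j =
      w j + ∑ l ∈ Finset.univ.filter (fun l => wt l < wt j), symp (w l) (w j) • u l :=
    fun j => rfl
  have hGuv : ∀ i j, symp (u i) (v j) = if i = j then 1 else 0 := by
    intro i j
    rw [hvdef, symp_add_right, symp_sum_right,
      Finset.sum_eq_zero (fun l _ => by rw [symp_smul_right, hGuu, mul_zero]), add_zero, hGuw]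
  have hGvu : ∀ i j, symp (v i) (u j) = if j = i then 1 else 0 := fun i j => by
    rw [symp_comm, hGuv]
  have hGvv : ∀ i j, symp (v i) (v j) = 0 := by
    intro i j
    rw [hvdef i, symp_add_left, symp_sum_left]
    rw [hvdef j, symp_add_right, symp_sum_right]
    have hterm2 : ∑ l ∈ Finset.univ.filter (fun l => wt l < wt j),
        symp (w i) (symp (w l) (w j) • u l)
        = if wt i < wt j then symp (w i) (w j) else 0 := by
      rw [Finset.sum_congr rfl (fun l _ => by
        rw [symp_smul_right, hGwu, mul_ite, mul_one, mul_zero])]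
      rw [Finset.sum_ite_eq' (Finset.univ.filter (fun l => wt l < wt j)) i
        (fun l => symp (w l) (w j))]
      simp only [Finset.mem_filter, Finset.mem_univ, true_and]
    have hterm3 : ∑ l ∈ Finset.univ.filter (fun l => wt l < wt i),
        symp (symp (w l) (w i) • u l) (v j)
        = if wt j < wt i then symp (w j) (w i) else 0 := by
      rw [Finset.sum_congr rfl (fun l _ => by
        rw [symp_smul_left, hGuv, mul_ite, mul_one, mul_zero])]
      rw [Finset.sum_ite_eq' (Finset.univ.filter (fun l => wt l < wt i)) j
        (fun l => symp (w l) (w i))]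
      simp only [Finset.mem_filter, Finset.mem_univ, true_and]
    rw [hterm2, hterm3]
    rcases lt_trichotomy (wt i) (wt j) with h | h | h
    · rw [if_pos h, if_neg (by omega)]
      rw [add_zero]
      exact char2 _
    · have hij : i = j := hwtinj _ _ h
      subst hij
      simp [symp_self]
    · rw [if_neg (by omega), if_pos h, add_zero, symp_comm (w j) (w i)]
      exact char2 _
  have hvL₂ : ∀ j, v (Sum.inr j) ∈ L₂ := by
    intro j
    rw [hvdef]
    refine Submodule.add_mem _ (hwL₂ j) (Submodule.sum_mem _ ?_)
    rintro (l | l) _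
    · exact Submodule.smul_mem _ _ (hIL₂ (huI l))
    · rw [show symp (w (Sum.inr l)) (w (Sum.inr j)) = 0 from h₂.1 _ (hwL₂ l) _ (hwL₂ j),
        zero_smul]
      exact Submodule.zero_mem _
  set t : (Fin k ⊕ Fin (n - k)) → V n :=
    Sum.elim (fun i => u (Sum.inl i)) (fun j => v (Sum.inr j)) with ht
  have hdual : ∀ p q, symp (Sum.elim (fun i => v (Sum.inl i)) (fun j => u (Sum.inr j)) p) (t q)
      = if p = q then 1 else 0 := by
    rintro (i | i) (j | j) <;> simp only [ht, Sum.elim_inl, Sum.elim_inr]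
    · rw [hGvu]
      simp only [Sum.inl.injEq]
      by_cases h : i = j
      · subst h; simp
      · rw [if_neg (fun hc => h hc.symm), if_neg h]
    · rw [hGvv]
      simp
    · rw [hGuu]
      simp
    · exact hGuv _ _
  have hindept : LinearIndependent F2 t := linIndep_of_dual t _ hdual
  have hle : Submodule.span F2 (Set.range t) ≤ L₂ := by
    rw [Submodule.span_le]
    rintro x ⟨(i | j), rfl⟩
    · exact hIL₂ (huI i)
    · exact hvL₂ j
  have hcard : Fintype.card (Fin k ⊕ Fin (n - k)) = n := by
    rw [Fintype.card_sum, Fintype.card_fin, Fintype.card_fin]; omega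
  have hfr : Module.finrank F2 (Submodule.span F2 (Set.range t)) = n := by
    rw [finrank_span_eq_card hindept, hcard]
  have hspant : Submodule.span F2 (Set.range t) = L₂ :=
    Submodule.eq_of_le_of_finrank_le hle (by rw [h₂.2, hfr])
  exact ⟨u, v, hGuu, hGvv, hGuv, hspanu, hspant⟩

lemma exists_symplecto {n : ℕ} (L₁ L₂ L₁' L₂' : Submodule F2 (V n))
    (h₁ : IsLagrangian L₁) (h₂ : IsLagrangian L₂)
    (h₁' : IsLagrangian L₁') (h₂' : IsLagrangian L₂')
    (hdim : Module.finrank F2 ↥(L₁ ⊓ L₂) = Module.finrank F2 ↥(L₁' ⊓ L₂')) :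
    ∃ g : V n ≃ₗ[F2] V n, (∀ x y, symp (g x) (g y) = symp x y) ∧
      Submodule.map (g : V n →ₗ[F2] V n) L₁ = L₁' ∧
      Submodule.map (g : V n →ₗ[F2] V n) L₂ = L₂' := by
  classical
  obtain ⟨k, hk, hk'⟩ : ∃ k, Module.finrank F2 ↥(L₁ ⊓ L₂) = k ∧
      Module.finrank F2 ↥(L₁' ⊓ L₂') = k := ⟨_, rfl, hdim.symm⟩
  obtain ⟨u, v, hGuu, hGvv, hGuv, hsp1, hsp2⟩ := exists_adapted L₁ L₂ h₁ h₂ hk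
  obtain ⟨u', v', hGuu', hGvv', hGuv', hsp1', hsp2'⟩ := exists_adapted L₁' L₂' h₁' h₂' hk'
  set z : (Fin k ⊕ Fin (n - k)) ⊕ (Fin k ⊕ Fin (n - k)) → V n := Sum.elim u v with hz
  set z' : (Fin k ⊕ Fin (n - k)) ⊕ (Fin k ⊕ Fin (n - k)) → V n := Sum.elim u' v' with hz'
  have hGram : ∀ p q, symp (z p) (z q) = symp (z' p) (z' q) := by
    rintro (i | i) (j | j) <;> simp only [hz, hz', Sum.elim_inl, Sum.elim_inr]
    · rw [hGuu, hGuu']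
    · rw [hGuv, hGuv']
    · rw [symp_comm, hGuv, symp_comm (v' i), hGuv']
    · rw [hGvv, hGvv']
  have hdualz : ∀ p q, symp (Sum.elim v u p) (z q) = if p = q then 1 else 0 := by
    rintro (i | i) (j | j) <;> simp only [hz, Sum.elim_inl, Sum.elim_inr]
    · rw [symp_comm, hGuv]
      simp only [Sum.inl.injEq]
      by_cases h : i = j
      · subst h; simp
      · rw [if_neg (fun hc => h hc.symm), if_neg h]
    · rw [hGvv]; simp
    · rw [hGuu]; simp
    · rw [hGuv]
      simp only [Sum.inr.injEq]
  have hdualz' : ∀ p q, symp (Sum.elim v' u' p) (z' q) = if p = q then 1 else 0 := by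
    rintro (i | i) (j | j) <;> simp only [hz', Sum.elim_inl, Sum.elim_inr]
    · rw [symp_comm, hGuv']
      simp only [Sum.inl.injEq]
      by_cases h : i = j
      · subst h; simp
      · rw [if_neg (fun hc => h hc.symm), if_neg h]
    · rw [hGvv']; simp
    · rw [hGuu']; simp
    · rw [hGuv']
      simp only [Sum.inr.injEq]
  have hind : LinearIndependent F2 z := linIndep_of_dual z _ hdualz
  have hind' : LinearIndependent F2 z' := linIndep_of_dual z' _ hdualz'
  have hkn : k ≤ n := by
    have h' : Module.finrank F2 ↥(L₁ ⊓ L₂) ≤ Module.finrank F2 ↥L₁ :=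
      Submodule.finrank_mono inf_le_left
    have e := h₁.2
    omega
  have hcard : Fintype.card ((Fin k ⊕ Fin (n - k)) ⊕ (Fin k ⊕ Fin (n - k)))
      = Module.finrank F2 (V n) := by
    rw [finrank_V]
    simp only [Fintype.card_sum, Fintype.card_fin]
    omega
  have htop : Submodule.span F2 (Set.range z) = ⊤ :=
    Submodule.eq_top_of_finrank_eq (by rw [finrank_span_eq_card hind, hcard])
  have htop' : Submodule.span F2 (Set.range z') = ⊤ :=
    Submodule.eq_top_of_finrank_eq (by rw [finrank_span_eq_card hind', hcard])
  let b := Basis.mk hind htop.ge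
  let b' := Basis.mk hind' htop'.ge
  let g : V n ≃ₗ[F2] V n := b.equiv b' (Equiv.refl _)
  have hg : ∀ p, g (z p) = z' p := by
    intro p
    have h1 : z p = b p := by rw [Basis.coe_mk]
    rw [h1, Basis.equiv_apply, Equiv.refl_apply, Basis.coe_mk]
  have hsymp : ∀ x y, symp (g x) (g y) = symp x y := by
    have key : (Bf n).compl₁₂ (g : V n →ₗ[F2] V n) (g : V n →ₗ[F2] V n) = Bf n := by
      apply b.ext
      intro p
      apply b.ext
      intro q
      simp only [LinearMap.compl₁₂_apply, LinearEquiv.coe_coe, Bf_apply]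
      have hp : b p = z p := by rw [Basis.coe_mk]
      have hq : b q = z q := by rw [Basis.coe_mk]
      rw [hp, hq, hg, hg]
      exact (hGram p q).symm
    intro x y
    have := congrFun (congrArg DFunLike.coe (congrFun (congrArg DFunLike.coe key) x)) y
    simpa using this
  refine ⟨g, hsymp, ?_, ?_⟩
  · rw [← hsp1, ← hsp1', Submodule.map_span, ← Set.range_comp]
    congr 1
    apply congrArg
    funext i
    exact hg (Sum.inl i)
  · rw [← hsp2, ← hsp2', Submodule.map_span, ← Set.range_comp]
    congr 1
    apply congrArg
    funext q
    cases q with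
    | inl i => exact hg (Sum.inl (Sum.inl i))
    | inr j => exact hg (Sum.inr (Sum.inr j))

/-- If `L₁, L₂, L₁′, L₂′ ⊂ 𝔽₂^{2n}` are Lagrangian subspaces with
`dim(L₁ ∩ L₂) = dim(L₁′ ∩ L₂′)`, then the sums of `|S ∩ L₁|²|S ∩ L₂|²` and
`|S ∩ L₁′|²|S ∩ L₂′|²` over all `m`-dimensional isotropic subspaces `S` agree. -/
theorem stmt4 (n m : ℕ) (hm : m ≤ n) (L₁ L₂ L₁' L₂' : Submodule F2 (V n))
    (h₁ : IsLagrangian L₁) (h₂ : IsLagrangian L₂)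
    (h₁' : IsLagrangian L₁') (h₂' : IsLagrangian L₂')
    (hdim : Module.finrank F2 ↥(L₁ ⊓ L₂) = Module.finrank F2 ↥(L₁' ⊓ L₂')) :
    (∑ᶠ S ∈ {S : Submodule F2 (V n) | IsIsotropic S ∧ Module.finrank F2 S = m},
        Nat.card ↥(S ⊓ L₁) ^ 2 * Nat.card ↥(S ⊓ L₂) ^ 2)
      = ∑ᶠ S ∈ {S : Submodule F2 (V n) | IsIsotropic S ∧ Module.finrank F2 S = m},
          Nat.card ↥(S ⊓ L₁') ^ 2 * Nat.card ↥(S ⊓ L₂') ^ 2 := by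
  classical
  obtain ⟨g, hgsymp, hg1, hg2⟩ := exists_symplecto L₁ L₂ L₁' L₂' h₁ h₂ h₁' h₂' hdim
  have hgsymp' : ∀ x y, symp (g.symm x) (g.symm y) = symp x y := by
    intro x y
    have := hgsymp (g.symm x) (g.symm y)
    rw [g.apply_symm_apply, g.apply_symm_apply] at this
    exact this.symm
  have hcard : ∀ W : Submodule F2 (V n),
      Nat.card ↥(Submodule.map (g : V n →ₗ[F2] V n) W) = Nat.card ↥W := fun W =>
    Nat.card_congr (Submodule.equivMapOfInjective _ g.injective W).toEquiv.symm
  have hiso_map : ∀ S : Submodule F2 (V n), IsIsotropic S →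
      IsIsotropic (Submodule.map (g : V n →ₗ[F2] V n) S) := by
    intro S hS x hx y hy
    rw [Submodule.mem_map] at hx hy
    obtain ⟨a, ha, rfl⟩ := hx
    obtain ⟨b, hb, rfl⟩ := hy
    simp only [LinearEquiv.coe_coe]
    rw [hgsymp]
    exact hS a ha b hb
  have hiso_map' : ∀ S : Submodule F2 (V n), IsIsotropic S →
      IsIsotropic (Submodule.map (g.symm : V n →ₗ[F2] V n) S) := by
    intro S hS x hx y hy
    rw [Submodule.mem_map] at hx hy
    obtain ⟨a, ha, rfl⟩ := hx
    obtain ⟨b, hb, rfl⟩ := hy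
    simp only [LinearEquiv.coe_coe]
    rw [hgsymp']
    exact hS a ha b hb
  apply finsum_mem_eq_of_bijOn (Submodule.map (g : V n →ₗ[F2] V n))
  · refine ⟨?_, ?_, ?_⟩
    · rintro S ⟨hiso, hfr⟩
      refine ⟨hiso_map S hiso, ?_⟩
      rw [LinearEquiv.finrank_map_eq g S, hfr]
    · intro S _ T _ hST
      exact Submodule.map_injective_of_injective g.injective hST
    · rintro T ⟨hiso, hfr⟩
      refine ⟨Submodule.map (g.symm : V n →ₗ[F2] V n) T, ⟨hiso_map' T hiso, ?_⟩, ?_⟩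
      · rw [LinearEquiv.finrank_map_eq g.symm T, hfr]
      · rw [← Submodule.map_comp]
        have hcomp : (g : V n →ₗ[F2] V n).comp (g.symm : V n →ₗ[F2] V n)
            = LinearMap.id := LinearMap.ext fun x => by simp
        rw [hcomp, Submodule.map_id]
  · intro S _
    rw [← hg1, ← hg2, ← Submodule.map_inf (g : V n →ₗ[F2] V n) g.injective,
      ← Submodule.map_inf (g : V n →ₗ[F2] V n) g.injective, hcard, hcard]
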